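/- Let R be a weakly strongly 2-nil-clean ring. If there exist idempotents e, f ∈ R and a nilpotent n ∈ R, commuting with each other, such that -2 = e + f + n or -2 = e - f + n, then R is strongly 2-nil-clean. -/

import Mathlib

section Helpers

variable {S : Type*} [CommRing S]

lemma pow_idem' {x : S} (hx : x * x = x) : ∀ m : ℕ, x ^ (m + 1) = x := by
  intro m
  induction m with
  | zero => simp
  | succ m ih => rw [pow_succ, ih, hx]

lemma six_nil_of_neg_two {e f n : S} (he : e * e = e) (hf : f * f = f)
    (hn : IsNilpotent n)
    (h : (-2 : S) = e + f + n ∨ (-2 : S) = e - f + n) : IsNilpotent (6 : S) := by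
  obtain ⟨m, hm⟩ := hn
  rcases h with h | h
  · have key : (e + f) * ((e + f) - 1) * ((e + f) - 2) = 0 := by
      linear_combination (e + 3*f - 2) * he + (f + 3*e - 2) * hf
    have hef : e + f = -2 - n := by linear_combination -h
    have h24 : (24 : S) = n * (-(26 + 9*n + n*n)) := by
      rw [hef] at key
      linear_combination -key
    have h24n : IsNilpotent (24 : S) := by
      rw [h24]; exact ⟨m, by rw [mul_pow, hm, zero_mul]⟩
    obtain ⟨j, hj⟩ := h24n
    refine ⟨3 * j, ?_⟩
    have h216 : (6 : S) ^ (3 * j) = (24 : S) ^ j * (9 : S) ^ j := by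
      rw [← mul_pow, pow_mul]; norm_num
    rw [h216, hj, zero_mul]
  · have key : (e - f) * ((e - f) - 1) * ((e - f) + 1) = 0 := by
      linear_combination (e - 3*f + 1) * he + (3*e - f - 1) * hf
    have hef : e - f = -2 - n := by linear_combination -h
    have h6 : (6 : S) = n * (-(11 + 6*n + n*n)) := by
      rw [hef] at key
      linear_combination -key
    rw [h6]; exact ⟨m, by rw [mul_pow, hm, zero_mul]⟩

lemma key_decomp (k : ℕ) (h6 : (6 : S) ^ (k + 1) = 0)
    {e f n : S} (a : S) (he : e * e = e) (hf : f * f = f) (hn : IsNilpotent n)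
    (ha : a = e + f + n ∨ a = e - f + n ∨ a = -e + f + n ∨ a = -e - f + n) :
    ∃ E F N : S, E * E = E ∧ F * F = F ∧ IsNilpotent N ∧ a = E + F + N := by
  have hcop : IsCoprime ((2 : ℤ) ^ (k+1)) ((3 : ℤ) ^ (k+1)) := by
    apply IsCoprime.pow
    rw [Int.isCoprime_iff_gcd_eq_one]; norm_num
  obtain ⟨x, y, hxy⟩ := hcop
  have hxy' : (x : S) * 2 ^ (k+1) + (y : S) * 3 ^ (k+1) = 1 := by
    have hc := congrArg (fun t : ℤ => (t : S)) hxy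
    push_cast at hc
    linear_combination hc
  have h23 : (2:S)^(k+1) * (3:S)^(k+1) = (6:S)^(k+1) := by
    rw [← mul_pow]; norm_num
  set U : S := (y : S) * 3 ^ (k+1) with hUdef
  set V : S := (x : S) * 2 ^ (k+1) with hVdef
  have hUV1 : U + V = 1 := by rw [hUdef, hVdef]; linear_combination hxy'
  have hUV0 : U * V = 0 := by
    have hh : U * V = ((x:S) * (y:S)) * (6 : S) ^ (k+1) := by
      rw [hUdef, hVdef]; linear_combination ((x:S)*(y:S)) * h23
    rw [hh, h6, mul_zero]
  have hU : U * U = U := by linear_combination U * hUV1 - hUV0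
  have hV : V * V = V := by linear_combination V * hUV1 - hUV0
  have h2U : IsNilpotent (2 * U) := by
    refine ⟨k + 1, ?_⟩
    have h1 : (2 * U) ^ (k+1) = (2:S)^(k+1) * U := by
      rw [mul_pow, pow_idem' hU]
    have h2 : (2:S)^(k+1) * U = (y : S) * (6:S)^(k+1) := by
      rw [hUdef]; linear_combination (y:S) * h23
    rw [h1, h2, h6, mul_zero]
  have h3V : IsNilpotent (3 * V) := by
    refine ⟨k + 1, ?_⟩
    have h1 : (3 * V) ^ (k+1) = (3:S)^(k+1) * V := by
      rw [mul_pow, pow_idem' hV]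
    have h2 : (3:S)^(k+1) * V = (x : S) * (6:S)^(k+1) := by
      rw [hVdef]; linear_combination (x:S) * h23
    rw [h1, h2, h6, mul_zero]
  have glue : ∀ p q : S, p * p = p → q * q = q → (U*p + V*q) * (U*p + V*q) = U*p + V*q := by
    intro p q hp hq
    linear_combination (p*p) * hU + U * hp + (q*q) * hV + V * hq + (2*p*q) * hUV0
  have nilsum : ∀ b c : S, IsNilpotent (n - 2*U*b - 3*V*c) := by
    intro b c
    have h1 : IsNilpotent ((2*U) * (-b)) := (Commute.all _ _).isNilpotent_mul_right h2U
    have h2 : IsNilpotent ((3*V) * (-c)) := (Commute.all _ _).isNilpotent_mul_right h3V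
    have h3 := (Commute.all _ _).isNilpotent_add hn ((Commute.all _ _).isNilpotent_add h1 h2)
    convert h3 using 1
    ring
  have hxor : (e + f - 2*(e*f)) * (e + f - 2*(e*f)) = e + f - 2*(e*f) := by
    linear_combination (1 + 4*(f*f) - 4*f) * he + hf
  have hor : (e + f - e*f) * (e + f - e*f) = e + f - e*f := by
    linear_combination (1 + f*f - 2*f) * he + (1 - e) * hf
  have hfe : (f - e*f) * (f - e*f) = f - e*f := by
    linear_combination (f*f) * he + (1 - e) * hf
  have hef' : (e - e*f) * (e - e*f) = e - e*f := by
    linear_combination (e*e) * hf + (1 - f) * he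
  rcases ha with ha | ha | ha | ha
  · exact ⟨e, f, n, he, hf, hn, ha⟩
  · exact ⟨U*e + V*(e + f - 2*(e*f)), U*f + V*(f - e*f), n - 2*U*f - 3*V*(f - e*f),
      glue _ _ he hxor, glue _ _ hf hfe, nilsum _ _,
      by linear_combination ha - (e - f) * hUV1⟩
  · exact ⟨U*e + V*(e - e*f), U*f + V*(e + f - 2*(e*f)), n - 2*U*e - 3*V*(e - e*f),
      glue _ _ he hef', glue _ _ hf hxor, nilsum _ _,
      by linear_combination ha - (-e + f) * hUV1⟩
  · exact ⟨U*e + V*(e + f - 2*(e*f)), U*f + V*(e + f - e*f), n - 2*U*(e+f) - 3*V*(e + f - e*f),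
      glue _ _ he hxor, glue _ _ hf hor, nilsum _ _,
      by linear_combination ha + (e + f) * hUV1⟩

end Helpers

section Transfer

variable {R : Type*} [Ring R]

lemma nil_of_coe {S : Subring R} {x : S} (h : IsNilpotent (x : R)) : IsNilpotent x := by
  obtain ⟨m, hm⟩ := h
  exact ⟨m, Subtype.ext (by push_cast; exact hm)⟩

lemma coe_nil {S : Subring R} {x : S} (h : IsNilpotent x) : IsNilpotent (x : R) := by
  obtain ⟨m, hm⟩ := h
  refine ⟨m, ?_⟩
  have := congrArg (Subtype.val) hm
  push_cast at this
  exact this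

lemma hcomm_set {e f n : R} (hef : Commute e f) (hen : Commute e n) (hfn : Commute f n) :
    ∀ x ∈ ({e, f, n} : Set R), ∀ y ∈ ({e, f, n} : Set R), x * y = y * x := by
  rintro x hx y hy
  simp only [Set.mem_insert_iff, Set.mem_singleton_iff] at hx hy
  rcases hx with rfl | rfl | rfl <;> rcases hy with rfl | rfl | rfl <;>
    first
      | rfl
      | exact hef | exact hef.symm | exact hen | exact hen.symm | exact hfn | exact hfn.symm

lemma six_nil_R
    (h : ∃ e f n : R, IsIdempotentElem e ∧ IsIdempotentElem f ∧ IsNilpotent n ∧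
      Commute e f ∧ Commute e n ∧ Commute f n ∧
      ((-2 : R) = e + f + n ∨ (-2 : R) = e - f + n)) : IsNilpotent (6 : R) := by
  obtain ⟨e, f, n, he, hf, hn, hef, hen, hfn, hca⟩ := h
  set s : Set R := {e, f, n} with hs
  letI : CommRing (Subring.closure s) := Subring.closureCommRingOfComm (hcomm_set hef hen hfn)
  have hem : e ∈ Subring.closure s := Subring.subset_closure (by simp [hs])
  have hfm : f ∈ Subring.closure s := Subring.subset_closure (by simp [hs])
  have hnm : n ∈ Subring.closure s := Subring.subset_closure (by simp [hs])
  set eS : Subring.closure s := ⟨e, hem⟩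
  set fS : Subring.closure s := ⟨f, hfm⟩
  set nS : Subring.closure s := ⟨n, hnm⟩
  have he' : eS * eS = eS := Subtype.ext (by push_cast; exact he)
  have hf' : fS * fS = fS := Subtype.ext (by push_cast; exact hf)
  have hn' : IsNilpotent nS := nil_of_coe hn
  have hca' : (-2 : Subring.closure s) = eS + fS + nS ∨
      (-2 : Subring.closure s) = eS - fS + nS := by
    rcases hca with hca | hca
    · exact Or.inl (Subtype.ext (by push_cast; exact hca))
    · exact Or.inr (Subtype.ext (by push_cast; exact hca))
  have h6 : IsNilpotent ((6 : Subring.closure s)) := six_nil_of_neg_two he' hf' hn' hca'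
  have := coe_nil h6
  rwa [show ((6 : Subring.closure s) : R) = 6 by norm_cast] at this

end Transfer


/-- A ring is weakly strongly 2-nil-clean if every element is `±e ± f + n` with
`e, f` idempotents and `n` nilpotent, all commuting with each other. -/
def IsWeaklyStrongly2NilClean (R : Type*) [Ring R] : Prop :=
  ∀ a : R, ∃ e f n : R, IsIdempotentElem e ∧ IsIdempotentElem f ∧ IsNilpotent n ∧
    Commute e f ∧ Commute e n ∧ Commute f n ∧
    (a = e + f + n ∨ a = e - f + n ∨ a = -e + f + n ∨ a = -e - f + n)

/-- A ring is strongly 2-nil-clean if every element is `e + f + n` with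
`e, f` idempotents and `n` nilpotent, all commuting with each other. -/
def IsStrongly2NilClean (R : Type*) [Ring R] : Prop :=
  ∀ a : R, ∃ e f n : R, IsIdempotentElem e ∧ IsIdempotentElem f ∧ IsNilpotent n ∧
    Commute e f ∧ Commute e n ∧ Commute f n ∧ a = e + f + n

theorem strongly2NilClean_of_wsnc_neg_two {R : Type*} [Ring R]
    (hR : IsWeaklyStrongly2NilClean R)
    (h : ∃ e f n : R, IsIdempotentElem e ∧ IsIdempotentElem f ∧ IsNilpotent n ∧
      Commute e f ∧ Commute e n ∧ Commute f n ∧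
      ((-2 : R) = e + f + n ∨ (-2 : R) = e - f + n)) :
    IsStrongly2NilClean R := by
  obtain ⟨k, hk⟩ := six_nil_R h
  intro a
  obtain ⟨e, f, n, he, hf, hn, hef, hen, hfn, ha⟩ := hR a
  set s : Set R := {e, f, n} with hs
  letI : CommRing (Subring.closure s) := Subring.closureCommRingOfComm (hcomm_set hef hen hfn)
  have hem : e ∈ Subring.closure s := Subring.subset_closure (by simp [hs])
  have hfm : f ∈ Subring.closure s := Subring.subset_closure (by simp [hs])
  have hnm : n ∈ Subring.closure s := Subring.subset_closure (by simp [hs])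
  set eS : Subring.closure s := ⟨e, hem⟩
  set fS : Subring.closure s := ⟨f, hfm⟩
  set nS : Subring.closure s := ⟨n, hnm⟩
  have he' : eS * eS = eS := Subtype.ext (by push_cast; exact he)
  have hf' : fS * fS = fS := Subtype.ext (by push_cast; exact hf)
  have hn' : IsNilpotent nS := nil_of_coe hn
  have h6S : (6 : Subring.closure s) ^ (k + 1) = 0 := by
    refine Subtype.ext ?_
    have h66 : ((6 : Subring.closure s) : R) = 6 := by norm_cast
    push_cast
    rw [h66, pow_succ, hk, zero_mul]
  -- the element of S corresponding to a
  have haS : ∃ aS : Subring.closure s, (aS : R) = a ∧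
      (aS = eS + fS + nS ∨ aS = eS - fS + nS ∨ aS = -eS + fS + nS ∨ aS = -eS - fS + nS) := by
    rcases ha with ha | ha | ha | ha
    · exact ⟨eS + fS + nS, by push_cast; rw [ha], Or.inl rfl⟩
    · exact ⟨eS - fS + nS, by push_cast; rw [ha], Or.inr (Or.inl rfl)⟩
    · exact ⟨-eS + fS + nS, by push_cast; rw [ha], Or.inr (Or.inr (Or.inl rfl))⟩
    · exact ⟨-eS - fS + nS, by push_cast; rw [ha], Or.inr (Or.inr (Or.inr rfl))⟩
  obtain ⟨aS, haSR, haS⟩ := haS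
  obtain ⟨E, F, N, hE, hF, hN, hsum⟩ := key_decomp k h6S aS he' hf' hn' haS
  refine ⟨(E : R), (F : R), (N : R), ?_, ?_, coe_nil hN, ?_, ?_, ?_, ?_⟩
  · have := congrArg Subtype.val hE; push_cast at this; exact this
  · have := congrArg Subtype.val hF; push_cast at this; exact this
  · have := congrArg Subtype.val (mul_comm E F); push_cast at this; exact this
  · have := congrArg Subtype.val (mul_comm E N); push_cast at this; exact this
  · have := congrArg Subtype.val (mul_comm F N); push_cast at this; exact this
  · have := congrArg Subtype.val hsum; push_cast at this
    rw [← haSR]; exact this
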